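/- arXiv:1409.0399 — 5 statements merged into one kernel-verified Lean document; each statement's English description precedes it below -/
import Mathlib

section
/- For every sequence (jₙ)ₙ≥1 of polygonal knots in ℝ³ there exist a continuous map f : ℝ³ → ℝ³ and a polygonal knot k in ℝ³ that is iteratively injective with respect to f, such that for every n ≥ 1 the image f^{n−1}(k) is a knot that is ambient isotopic to jₙ. -/
open Set

/-- The ambient 3-space, `ℝ³`, modeled as `ℝ × ℝ × ℝ`. -/
abbrev E3 : Type := ℝ × ℝ × ℝ

/-- A knot in `ℝ³`: a subset homeomorphic to the circle. -/
def IsKnot (k : Set E3) : Prop := Nonempty (k ≃ₜ Circle)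

/-- A polygonal knot: a knot which is a union of finitely many straight line segments. -/
def IsPolygonalKnot (k : Set E3) : Prop :=
  IsKnot k ∧ ∃ S : Finset (E3 × E3), k = ⋃ p ∈ S, segment ℝ p.1 p.2

/-- Ambient isotopy of subsets of `ℝ³`. -/
def AmbientIsotopic (k₁ k₂ : Set E3) : Prop :=
  ∃ H : (Icc (0:ℝ) 1) × E3 → E3,
    Continuous H ∧
    (∀ t : Icc (0:ℝ) 1, IsHomeomorph fun x => H (t, x)) ∧
    (∀ x, H (⟨0, by simp⟩, x) = x) ∧
    (fun x => H (⟨1, by simp⟩, x)) '' k₁ = k₂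

/-- `A` is iteratively injective with respect to `g` if every iterate `gⁿ` is injective on `A`. -/
def IterativelyInjective (g : E3 → E3) (A : Set E3) : Prop :=
  ∀ n : ℕ, Set.InjOn (g^[n]) A

/-- An affine homeomorphism `x ↦ c • x + v` of `ℝ³`. -/
noncomputable def affHomeo (c : ℝ) (hc : c ≠ 0) (v : E3) : E3 ≃ₜ E3 :=
  (Homeomorph.smulOfNeZero c hc).trans (Homeomorph.addRight v)

lemma affHomeo_apply (c : ℝ) (hc : c ≠ 0) (v : E3) (x : E3) :
    affHomeo c hc v x = c • x + v := rfl

lemma isHomeomorph_aff (a : ℝ) (ha : a ≠ 0) (b : E3) :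
    IsHomeomorph (fun x : E3 => a • x + b) :=
  (affHomeo a ha b).isHomeomorph

lemma ambientIsotopic_aff (c : ℝ) (hc : 0 < c) (v : E3) (s : Set E3) :
    AmbientIsotopic ((fun x : E3 => c • x + v) '' s) s := by
  refine ⟨fun p => ((1 - (p.1 : ℝ)) + (p.1 : ℝ) * c⁻¹) • p.2 - ((p.1 : ℝ) * c⁻¹) • v,
    ?_, ?_, ?_, ?_⟩
  · fun_prop
  · intro t
    have ht0 : (0:ℝ) ≤ t := t.2.1
    have ht1 : (t:ℝ) ≤ 1 := t.2.2
    have hci : (0:ℝ) < c⁻¹ := by positivity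
    have ha : (0:ℝ) < (1 - (t:ℝ)) + (t:ℝ) * c⁻¹ := by
      rcases eq_or_lt_of_le ht1 with h | h
      · have h2 : (t:ℝ) * c⁻¹ = 1 * c⁻¹ := by rw [h]
        have h3 : (1:ℝ) * c⁻¹ = c⁻¹ := one_mul _
        linarith
      · have h1 : (0:ℝ) < 1 - (t:ℝ) := by linarith
        have h2 : (0:ℝ) ≤ (t:ℝ) * c⁻¹ := by positivity
        linarith
    have := isHomeomorph_aff _ ha.ne' (-(((t:ℝ) * c⁻¹) • v))
    simpa [sub_eq_add_neg] using this
  · intro x; simp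
  · rw [← image_comp]
    have : ((fun x => ((1 - ((⟨1, by simp⟩ : Icc (0:ℝ) 1) : ℝ))
        + ((⟨1, by simp⟩ : Icc (0:ℝ) 1) : ℝ) * c⁻¹) • x
        - (((⟨1, by simp⟩ : Icc (0:ℝ) 1) : ℝ) * c⁻¹) • v) ∘ (fun x : E3 => c • x + v)) = id := by
      funext x
      simp [Function.comp, smul_add, smul_smul, inv_mul_cancel₀ hc.ne']
    rw [this, image_id]

lemma nat_eq_of_abs_lt_one {m n : ℕ} (h : |(m:ℝ) - n| < 1) : m = n := by
  by_contra hne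
  have h3 : (m:ℤ) ≠ (n:ℤ) := by exact_mod_cast hne
  have h4 := Int.one_le_abs (sub_ne_zero.mpr h3)
  have : (1:ℝ) ≤ |(m:ℝ) - n| := by exact_mod_cast h4
  linarith

lemma abs_fst_sub_le_dist (y z : E3) : |y.1 - z.1| ≤ dist y z := by
  rw [Prod.dist_eq, ← Real.dist_eq]
  exact le_max_left _ _

/-- Theorem (infinite sequence): for every sequence of polygonal knots `(jₙ)` (indexed so that
`j n` is the `(n+1)`-st knot) there are a continuous map `f : ℝ³ → ℝ³` and a polygonal knot `k`,
iteratively injective with respect to `f`, with `fⁿ(k)` a knot ambient isotopic to `j n`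
for every `n ≥ 0`. -/
theorem infinite_sequence_of_knots (j : ℕ → Set E3) (hj : ∀ n, IsPolygonalKnot (j n)) :
    ∃ (f : E3 → E3) (k : Set E3), Continuous f ∧ IsPolygonalKnot k ∧
      IterativelyInjective f k ∧
      ∀ n : ℕ, IsKnot (f^[n] '' k) ∧ AmbientIsotopic (f^[n] '' k) (j n) := by
  classical
  -- homeomorphisms of the given knots with the circle
  have en : ∀ n, (j n : Set E3) ≃ₜ Circle := fun n => Classical.choice (hj n).1
  have hcomp : ∀ n, IsCompact (j n) := by
    intro n
    have : CompactSpace (j n) := (en n).symm.compactSpace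
    exact isCompact_iff_compactSpace.mpr this
  choose r hr using fun n => ((hcomp n).isBounded).subset_closedBall (0 : E3)
  set M : ℕ → ℝ := fun n => max (r n) 0 with hM
  have hM0 : ∀ n, 0 ≤ M n := fun n => le_max_right _ _
  set c : ℕ → ℝ := fun n => (4 * (M n + 1))⁻¹ with hcdef
  have hc : ∀ n, 0 < c n := by
    intro n; have := hM0 n; rw [hcdef]; positivity
  set v : ℕ → E3 := fun n => ((n:ℝ), 0, 0) with hv
  set Th : ∀ _ : ℕ, E3 ≃ₜ E3 := fun n => affHomeo (c n) (hc n).ne' (v n) with hTh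
  set k : ℕ → Set E3 := fun n => Th n '' j n with hk
  -- each kₙ lives in the ball of radius 1/4 around vₙ
  have hball : ∀ n, k n ⊆ Metric.closedBall (v n) 4⁻¹ := by
    intro n x hx
    obtain ⟨y, hy, rfl⟩ := hx
    rw [Metric.mem_closedBall, show Th n y = c n • y + v n from rfl, dist_eq_norm,
      add_sub_cancel_right, norm_smul, Real.norm_eq_abs, abs_of_pos (hc n)]
    have hyn : ‖y‖ ≤ M n := by
      have := hr n hy
      rw [Metric.mem_closedBall, dist_zero_right] at this
      exact this.trans (le_max_left _ _)
    have h1 : c n * ‖y‖ ≤ c n * (M n + 1) := by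
      apply mul_le_mul_of_nonneg_left _ (hc n).le
      linarith
    have h2 : c n * (M n + 1) = 4⁻¹ := by
      rw [hcdef]
      have : M n + 1 ≠ 0 := by have := hM0 n; linarith
      field_simp
    linarith
  have hfst : ∀ n x, x ∈ k n → |x.1 - (n:ℝ)| ≤ 4⁻¹ := by
    intro n x hx
    have h1 := hball n hx
    rw [Metric.mem_closedBall] at h1
    have h2 : |x.1 - (n:ℝ)| ≤ dist x (v n) := abs_fst_sub_le_dist x (v n)
    linarith
  have hsep : ∀ m n x, x ∈ k m → x ∈ k n → m = n := by
    intro m n x hm hn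
    apply nat_eq_of_abs_lt_one
    have h1 := hfst m x hm
    have h2 := hfst n x hn
    have t1 := abs_sub_le (m:ℝ) x.1 (n:ℝ)
    have e1 : |(m:ℝ) - x.1| = |x.1 - (m:ℝ)| := abs_sub_comm _ _
    linarith
  -- local finiteness and closedness of the union
  have hlf : LocallyFinite k := by
    intro x
    refine ⟨Metric.ball x 4⁻¹, Metric.ball_mem_nhds x (by norm_num), ?_⟩
    have hsub : {n | (k n ∩ Metric.ball x 4⁻¹).Nonempty} ⊆ {n : ℕ | (n:ℝ) ≤ x.1 + 1} := by
      rintro n ⟨y, hyk, hyb⟩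
      have h1 := hfst n y hyk
      have h2 : dist y x < 4⁻¹ := Metric.mem_ball.mp hyb
      have h3 := (abs_fst_sub_le_dist y x).trans h2.le
      have h4 := abs_le.mp h1
      have h5 := abs_le.mp h3
      simp only [mem_setOf_eq]
      linarith [h4.1, h4.2, h5.1, h5.2]
    refine Set.Finite.subset (Set.Finite.subset (Set.finite_Iic (⌈x.1 + 1⌉₊)) ?_) hsub
    intro n hn
    simp only [mem_setOf_eq] at hn
    simp only [mem_Iic]
    exact_mod_cast hn.trans (Nat.le_ceil _)
  have hkcomp : ∀ n, IsCompact (k n) := fun n => (hcomp n).image (Th n).continuous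
  set U : Set E3 := ⋃ n, k n with hU
  have hUclosed : IsClosed U := hlf.isClosed_iUnion fun n => (hkcomp n).isClosed
  have hksub : ∀ n, k n ⊆ U := fun n => subset_iUnion k n
  -- homeomorphisms of the kₙ with the circle
  set ψ : ∀ n, (k n : Set E3) ≃ₜ Circle := fun n => ((Th n).image (j n)).symm.trans (en n) with hψ
  -- the partial map to extend
  set g0 : E3 → E3 := fun x =>
    if h : ∃ n, x ∈ k n then
      ((ψ (Nat.find h + 1)).symm ((ψ (Nat.find h)) ⟨x, Nat.find_spec h⟩) : E3)
    else x with hg0def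
  have hg0 : ∀ (n : ℕ) (x : E3) (hx : x ∈ k n),
      g0 x = ((ψ (n+1)).symm ((ψ n) ⟨x, hx⟩) : E3) := by
    intro n x hx
    have hex : ∃ m, x ∈ k m := ⟨n, hx⟩
    have hfind : Nat.find hex = n := hsep _ _ x (Nat.find_spec hex) hx
    rw [hg0def]
    simp only
    rw [dif_pos hex]
    subst hfind
    rfl
  have hgk : ∀ n, ContinuousOn g0 (k n) := by
    intro n
    rw [continuousOn_iff_continuous_restrict]
    have : (k n).domRestrict g0 = fun z : (k n : Set E3) => ((ψ (n+1)).symm ((ψ n) z) : E3) := by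
      funext z
      exact hg0 n z z.2
    rw [this]
    exact continuous_subtype_val.comp ((ψ (n+1)).symm.continuous.comp (ψ n).continuous)
  have hgU : ContinuousOn g0 U := by
    intro x hx
    rw [hU, mem_iUnion] at hx
    obtain ⟨n, hxn⟩ := hx
    have hsub : U ∩ Metric.ball x 4⁻¹ ⊆ k n := by
      rintro y ⟨hyU, hyb⟩
      rw [hU, mem_iUnion] at hyU
      obtain ⟨m, hym⟩ := hyU
      have hmn : m = n := by
        apply nat_eq_of_abs_lt_one
        have h1 := hfst m y hym
        have h2 := hfst n x hxn
        have h3 := (abs_fst_sub_le_dist y x).trans (Metric.mem_ball.mp hyb).le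
        have t1 := abs_sub_le (m:ℝ) y.1 (n:ℝ)
        have t2 := abs_sub_le y.1 x.1 (n:ℝ)
        have e1 : |(m:ℝ) - y.1| = |y.1 - (m:ℝ)| := abs_sub_comm _ _
        have e2 : |x.1 - (n:ℝ)| = |(x.1:ℝ) - n| := rfl
        linarith
      rwa [hmn] at hym
    have hcw : ContinuousWithinAt g0 (U ∩ Metric.ball x 4⁻¹) x :=
      ((hgk n) x hxn).mono hsub
    exact (continuousWithinAt_inter (Metric.ball_mem_nhds x (by norm_num))).mp hcw
  -- Tietze extension
  obtain ⟨F, hF⟩ := ContinuousMap.exists_restrict_eq hUclosed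
    (⟨U.restrict g0, continuousOn_iff_continuous_restrict.mp hgU⟩ : C(U, E3))
  have hFU : ∀ x, x ∈ U → F x = g0 x := fun x hx => DFunLike.congr_fun hF ⟨x, hx⟩
  -- the iteration homeomorphisms
  set Φ : ∀ n, ((k 0 : Set E3)) ≃ₜ (k n : Set E3) := fun n => (ψ 0).trans (ψ n).symm with hΦ
  have hiter : ∀ n (z : (k 0 : Set E3)), (⇑F)^[n] ↑z = ↑(Φ n z) := by
    intro n
    induction n with
    | zero =>
      intro z
      have : Φ 0 z = z := by
        rw [hΦ]; simp
      rw [this]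
      rfl
    | succ n ih =>
      intro z
      rw [Function.iterate_succ_apply', ih z]
      have h1 : (↑(Φ n z) : E3) ∈ k n := (Φ n z).2
      rw [hFU _ (hksub n h1), hg0 n _ h1]
      congr 1
      have heta : (⟨↑(Φ n z), h1⟩ : (k n : Set E3)) = Φ n z := rfl
      rw [heta, hΦ]
      simp
  have himg : ∀ n, (⇑F)^[n] '' (k 0) = k n := by
    intro n
    ext y
    constructor
    · rintro ⟨x, hx, rfl⟩
      rw [show x = ((⟨x, hx⟩ : (k 0 : Set E3)) : E3) from rfl, hiter n ⟨x, hx⟩]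
      exact (Φ n ⟨x, hx⟩).2
    · intro hy
      refine ⟨↑((Φ n).symm ⟨y, hy⟩), ((Φ n).symm ⟨y, hy⟩).2, ?_⟩
      rw [hiter n _]
      simp
  have hinj : IterativelyInjective (⇑F) (k 0) := by
    intro n x₁ hx₁ x₂ hx₂ h
    rw [show x₁ = ((⟨x₁, hx₁⟩ : (k 0 : Set E3)) : E3) from rfl, hiter n ⟨x₁, hx₁⟩,
      show x₂ = ((⟨x₂, hx₂⟩ : (k 0 : Set E3)) : E3) from rfl, hiter n ⟨x₂, hx₂⟩] at h
    have h2 := (Φ n).injective (Subtype.coe_injective h)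
    exact congrArg Subtype.val h2
  -- ambient isotopy of kₙ with jₙ
  have hiso : ∀ n, AmbientIsotopic (k n) (j n) := by
    intro n
    have : k n = (fun x : E3 => c n • x + v n) '' j n := rfl
    rw [this]
    exact ambientIsotopic_aff (c n) (hc n) (v n) (j n)
  -- k 0 is a polygonal knot
  have hpoly : IsPolygonalKnot (k 0) := by
    refine ⟨⟨ψ 0⟩, ?_⟩
    obtain ⟨S, hS⟩ := (hj 0).2
    refine ⟨Finset.image (fun p : E3 × E3 => (Th 0 p.1, Th 0 p.2)) S, ?_⟩
    have hAex : ∃ A : E3 →ᵃ[ℝ] E3, ⇑A = ⇑(Th 0) := by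
      refine ⟨(c 0) • AffineMap.id ℝ E3 + AffineMap.const ℝ E3 (v 0), ?_⟩
      funext x
      simp [affHomeo_apply, hTh]
    obtain ⟨A, hA⟩ := hAex
    have himseg : ∀ a b : E3, Th 0 '' segment ℝ a b = segment ℝ (Th 0 a) (Th 0 b) := by
      intro a b
      rw [← hA]
      exact image_segment ℝ A a b
    have h1 : k 0 = ⋃ p ∈ S, segment ℝ (Th 0 p.1) (Th 0 p.2) := by
      rw [hk]
      simp only
      rw [hS, image_iUnion₂]
      exact iUnion₂_congr fun p _ => himseg p.1 p.2
    rw [h1]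
    ext y
    simp only [mem_iUnion, Finset.mem_image, exists_prop]
    constructor
    · rintro ⟨p, hp, hy⟩
      exact ⟨(Th 0 p.1, Th 0 p.2), ⟨p, hp, rfl⟩, hy⟩
    · rintro ⟨q, ⟨p, hp, rfl⟩, hy⟩
      exact ⟨p, hp, hy⟩
  refine ⟨⇑F, k 0, F.continuous, hpoly, hinj, ?_⟩
  intro n
  rw [himg n]
  exact ⟨⟨ψ n⟩, hiso n⟩
end

section
/- Let k₁ and k₂ be polygonal knots in ℝ³ and suppose there exists a polygonal homeomorphism φ : k₁ → k₂ satisfying: (1) p(φ(x)) = p(x) for every x ∈ k₁; and (2) whenever x, y ∈ k₁ with x ≠ y and p(x) = p(y), one has (h(x) − h(y))·(h(φ(x)) − h(φ(y))) > 0. Then k₁ and k₂ are ambient isotopic. -/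
open Set

/-- The projection `p(x,y,z) = (x,y)`. -/
def projXY : E3 → ℝ × ℝ := fun p => (p.1, p.2.1)

/-- The height function `h(x,y,z) = z`. -/
def height : E3 → ℝ := fun p => p.2.2

noncomputable section
namespace SameDiagramAux

def rho (x y : E3) : ℝ := dist (projXY x) (projXY y) + max (height x - height y) 0

lemma rho_nonneg (x y : E3) : 0 ≤ rho x y :=
  add_nonneg dist_nonneg (le_max_right _ _)

lemma rho_self (x : E3) : rho x x = 0 := by
  simp [rho]

lemma rho_triangle (x y z : E3) : rho x z ≤ rho x y + rho y z := by
  have h1 : dist (projXY x) (projXY z) ≤ dist (projXY x) (projXY y) + dist (projXY y) (projXY z) :=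
    dist_triangle _ _ _
  have h2 : max (height x - height z) 0 ≤
      max (height x - height y) 0 + max (height y - height z) 0 := by
    rcases le_total (height x - height z) 0 with h | h
    · have a1 : (0:ℝ) ≤ max (height x - height y) 0 := le_max_right _ _
      have a2 : (0:ℝ) ≤ max (height y - height z) 0 := le_max_right _ _
      rw [max_eq_right h]; linarith
    · calc max (height x - height z) 0 = (height x - height y) + (height y - height z) := by
            rw [max_eq_left h]; ring
        _ ≤ _ := add_le_add (le_max_left _ _) (le_max_left _ _)
  unfold rho; linarith

lemma continuous_rho : Continuous (fun q : E3 × E3 => rho q.1 q.2) := by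
  unfold rho projXY height
  fun_prop

lemma dist_projXY_le (x y : E3) : dist (projXY x) (projXY y) ≤ dist x y := by
  have h21 : dist x.2.1 y.2.1 ≤ dist x.2 y.2 := by
    rw [Prod.dist_eq (x := x.2) (y := y.2)]; exact le_max_left _ _
  have h2 : dist x.2 y.2 ≤ dist x y := by
    rw [Prod.dist_eq (x := x) (y := y)]; exact le_max_right _ _
  have h1 : dist x.1 y.1 ≤ dist x y := by
    rw [Prod.dist_eq (x := x) (y := y)]; exact le_max_left _ _
  have : dist (projXY x) (projXY y) = max (dist x.1 y.1) (dist x.2.1 y.2.1) := by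
    rw [Prod.dist_eq]; rfl
  rw [this]
  exact max_le h1 (h21.trans h2)

lemma rho_le_dist (x y : E3) : rho x y ≤ 2 * dist x y := by
  have h1 := dist_projXY_le x y
  have h2 : max (height x - height y) 0 ≤ dist x y := by
    have a1 : dist x.2.2 y.2.2 ≤ dist x.2 y.2 := by
      rw [Prod.dist_eq (x := x.2) (y := y.2)]; exact le_max_right _ _
    have a2 : dist x.2 y.2 ≤ dist x y := by
      rw [Prod.dist_eq (x := x) (y := y)]; exact le_max_right _ _
    have h3 : height x - height y ≤ dist x y := by
      calc height x - height y ≤ |height x - height y| := le_abs_self _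
        _ = dist x.2.2 y.2.2 := (Real.dist_eq _ _).symm
        _ ≤ dist x y := a1.trans a2
    exact max_le h3 dist_nonneg
  unfold rho; linarith

lemma rho_mono_z (a b : ℝ) {z z' : ℝ} (y : E3) (h : z ≤ z') :
    rho (a, b, z) y ≤ rho (a, b, z') y := by
  have : max (z - y.2.2) 0 ≤ max (z' - y.2.2) 0 :=
    max_le_max (by linarith) le_rfl
  unfold rho projXY height
  simp only
  linarith

lemma rho_eq_zero {x y : E3} (h : rho x y = 0) :
    projXY x = projXY y ∧ height x ≤ height y := by
  have h0 : (0:ℝ) ≤ max (height x - height y) 0 := le_max_right _ _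
  have h0' : (0:ℝ) ≤ dist (projXY x) (projXY y) := dist_nonneg
  unfold rho at h
  have hd : dist (projXY x) (projXY y) = 0 := by linarith
  have hm : max (height x - height y) 0 = 0 := by linarith
  refine ⟨dist_eq_zero.mp hd, ?_⟩
  have := le_max_left (height x - height y) 0
  rw [hm] at this; linarith



theorem vert {X : Type} [TopologicalSpace X] [T2Space X]
    [CompactlyGeneratedSpace (X × ℝ)]
    (g : X × ℝ → ℝ) (hg : Continuous g) (A : ℝ) (hb : ∀ p, |g p| ≤ A)
    (hm : ∀ (x : X) {z z' : ℝ}, z ≤ z' → g (x, z) ≤ g (x, z')) :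
    ∃ e : (X × ℝ) ≃ₜ (X × ℝ), ∀ p, e p = (p.1, p.2 + g p) := by
  set m : X × ℝ → X × ℝ := fun p => (p.1, p.2 + g p) with hm_def
  have hcont : Continuous m := by fun_prop
  have hinj : Function.Injective m := by
    rintro ⟨x, z⟩ ⟨x', z'⟩ h
    have h1 : x = x' := congrArg Prod.fst h
    subst h1
    have h2 : z + g (x, z) = z' + g (x, z') := congrArg Prod.snd h
    have h3 : z = z' := by
      rcases le_total z z' with hle | hle
      · have := hm x hle
        have hge : z' ≤ z := by linarith
        linarith [le_antisymm hle hge]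
      · have := hm x hle
        have hge : z ≤ z' := by linarith
        linarith [le_antisymm hle hge]
    rw [h3]
  have hsurj : Function.Surjective m := by
    rintro ⟨x, u⟩
    have hc : Continuous fun z : ℝ => z + g (x, z) := by fun_prop
    have hlo : u - A - 1 + g (x, u - A - 1) ≤ u := by
      have := (abs_le.mp (hb (x, u - A - 1))).2; linarith
    have hhi : u ≤ u + A + 1 + g (x, u + A + 1) := by
      have := (abs_le.mp (hb (x, u + A + 1))).1; linarith
    have hle : u - A - 1 ≤ u + A + 1 := by
      have h0 : 0 ≤ A := (abs_nonneg _).trans (hb (x, 0))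
      linarith
    obtain ⟨z, _, hz⟩ := intermediate_value_Icc hle hc.continuousOn ⟨hlo, hhi⟩
    exact ⟨(x, z), by simp [m, hz]⟩
  have hproper : IsProperMap m := by
    rw [isProperMap_iff_isCompact_preimage]
    refine ⟨hcont, fun K hK => ?_⟩
    obtain ⟨a, ha⟩ := (hK.image continuous_snd).bddBelow
    obtain ⟨b, hb'⟩ := (hK.image continuous_snd).bddAbove
    have hsub : m ⁻¹' K ⊆ (Prod.fst '' K) ×ˢ Icc (a - A) (b + A) := by
      rintro ⟨x, z⟩ hp
      have hK1 : m (x, z) ∈ K := hp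
      constructor
      · exact ⟨m (x, z), hK1, rfl⟩
      · have h1 : a ≤ z + g (x, z) := ha ⟨m (x, z), hK1, rfl⟩
        have h2 : z + g (x, z) ≤ b := hb' ⟨m (x, z), hK1, rfl⟩
        have := abs_le.mp (hb (x, z))
        exact ⟨by simp only; linarith, by simp only; linarith⟩
    exact ((hK.image continuous_fst).prod isCompact_Icc).of_isClosed_subset
      (hK.isClosed.preimage hcont) hsub
  have hclosed : IsClosedMap m := hproper.isClosedMap
  set E : (X × ℝ) ≃ (X × ℝ) := Equiv.ofBijective m ⟨hinj, hsurj⟩ with hE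
  have hsymm : Continuous E.symm := by
    rw [continuous_iff_isClosed]
    intro s hs
    have : E.symm ⁻¹' s = m '' s := by
      rw [← Equiv.image_eq_preimage_symm]
      rfl
    rw [this]
    exact hclosed s hs
  exact ⟨⟨E, hcont, hsymm⟩, fun p => rfl⟩


theorem exists_mono_extension (K : Set E3) (hK : IsCompact K) (hne : K.Nonempty)
    (f : E3 → ℝ) (hf : Continuous f)
    (hmono : ∀ x ∈ K, ∀ y ∈ K, projXY x = projXY y → height x ≤ height y → f x ≤ f y) :
    ∃ (F : E3 → ℝ) (A : ℝ), Continuous F ∧ (∀ x ∈ K, F x = f x) ∧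
      (∀ (a b : ℝ) {z z' : ℝ}, z ≤ z' → F (a, b, z) ≤ F (a, b, z')) ∧
      (∀ x, |F x| ≤ A) := by
  -- bound for f on K
  obtain ⟨M₀, hM₀⟩ := hK.exists_bound_of_continuousOn hf.continuousOn
  set M : ℝ := max M₀ 0 with hM_def
  have hM : ∀ x ∈ K, |f x| ≤ M := fun x hx => (hM₀ x hx).trans (le_max_left _ _)
  have hMpos : 0 ≤ M := le_max_right _ _
  -- the set of good (ε, κ) pairs
  set good : Set (ℝ × ℝ) :=
    {p | 0 < p.1 ∧ 0 ≤ p.2 ∧ ∀ x ∈ K, ∀ y ∈ K, f x - f y ≤ p.1 + p.2 * rho x y} with hgood_def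
  have hgood0 : (2 * M + 1, 0) ∈ good := by
    refine ⟨show (0:ℝ) < 2 * M + 1 by linarith, le_rfl, fun x hx y hy => ?_⟩
    have := abs_le.mp (hM x hx)
    have := abs_le.mp (hM y hy)
    simp only
    linarith [this.1, this.2]
  have hgood : ∀ ε : ℝ, 0 < ε → ∃ c : ℝ, 0 ≤ c ∧ (ε, c) ∈ good := by
    intro ε hε
    by_contra hcon
    push_neg at hcon
    have hwit : ∀ n : ℕ, ∃ q : E3 × E3, q.1 ∈ K ∧ q.2 ∈ K ∧
        ε + n * rho q.1 q.2 ≤ f q.1 - f q.2 := by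
      intro n
      have h1 := hcon n (Nat.cast_nonneg n)
      simp only [hgood_def, Set.mem_setOf_eq, not_and] at h1
      have h2 := h1 hε (Nat.cast_nonneg n)
      push_neg at h2
      obtain ⟨x, hx, y, hy, hlt⟩ := h2
      exact ⟨(x, y), hx, hy, hlt.le⟩
    set C : ℕ → Set (E3 × E3) := fun n =>
      (K ×ˢ K) ∩ {q | ε + n * rho q.1 q.2 ≤ f q.1 - f q.2} with hC_def
    have hCcl : ∀ n, IsClosed (C n) := by
      intro n
      refine ((hK.isClosed).prod (hK.isClosed)).inter (isClosed_le ?_ ?_)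
      · exact continuous_const.add (continuous_const.mul continuous_rho)
      · fun_prop
    have hCne : ∀ n, (C n).Nonempty := by
      intro n
      obtain ⟨q, h1, h2, h3⟩ := hwit n
      exact ⟨q, ⟨h1, h2⟩, h3⟩
    have hCdec : ∀ n, C (n + 1) ⊆ C n := by
      rintro n q ⟨hq1, hq2⟩
      refine ⟨hq1, ?_⟩
      have h0 := rho_nonneg q.1 q.2
      have : (n : ℝ) * rho q.1 q.2 ≤ ((n : ℝ) + 1) * rho q.1 q.2 := by nlinarith
      simp only [Set.mem_setOf_eq] at hq2 ⊢
      push_cast at hq2 ⊢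
      linarith
    have hC0 : IsCompact (C 0) :=
      (hK.prod hK).of_isClosed_subset (hCcl 0) Set.inter_subset_left
    obtain ⟨q, hq⟩ := IsCompact.nonempty_iInter_of_sequence_nonempty_isCompact_isClosed
      C hCdec hCne hC0 hCcl
    simp only [Set.mem_iInter] at hq
    have hq1 : q.1 ∈ K := (hq 0).1.1
    have hq2 : q.2 ∈ K := (hq 0).1.2
    have hqn : ∀ n : ℕ, ε + n * rho q.1 q.2 ≤ f q.1 - f q.2 := fun n => (hq n).2
    have hρ0 : rho q.1 q.2 = 0 := by
      by_contra hne'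
      have hρpos : 0 < rho q.1 q.2 := lt_of_le_of_ne (rho_nonneg _ _) (Ne.symm hne')
      obtain ⟨n, hn⟩ := exists_nat_gt ((2 * M) / rho q.1 q.2)
      have h1 := hqn n
      have h2 := abs_le.mp (hM q.1 hq1)
      have h3 := abs_le.mp (hM q.2 hq2)
      have h4 : (2 * M) < n * rho q.1 q.2 := (div_lt_iff₀ hρpos).mp hn
      linarith [h2.1, h2.2, h3.1, h3.2]
    obtain ⟨hproj, hh⟩ := rho_eq_zero hρ0
    have := hmono q.1 hq1 q.2 hq2 hproj hh
    have h5 := hqn 0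
    push_cast at h5
    linarith
  -- the modulus ω
  set ω : ℝ → ℝ := fun t => sInf ((fun p : ℝ × ℝ => p.1 + p.2 * t) '' good) with hω_def
  have hωSne : ∀ t : ℝ, ((fun p : ℝ × ℝ => p.1 + p.2 * t) '' good).Nonempty :=
    fun t => ⟨_, ⟨_, hgood0, rfl⟩⟩
  have hωSbdd : ∀ t : ℝ, 0 ≤ t → BddBelow ((fun p : ℝ × ℝ => p.1 + p.2 * t) '' good) := by
    rintro t ht
    refine ⟨0, ?_⟩
    rintro v ⟨p, hp, rfl⟩
    have := hp.1; have := hp.2.1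
    positivity
  have hω_le : ∀ p ∈ good, ∀ t : ℝ, 0 ≤ t → ω t ≤ p.1 + p.2 * t := by
    intro p hp t ht
    exact csInf_le (hωSbdd t ht) ⟨p, hp, rfl⟩
  have hω_nonneg : ∀ t : ℝ, 0 ≤ t → 0 ≤ ω t := by
    intro t ht
    refine le_csInf (hωSne t) ?_
    rintro v ⟨p, hp, rfl⟩
    have := hp.1; have := hp.2.1
    positivity
  have hω_key : ∀ x ∈ K, ∀ y ∈ K, f x - f y ≤ ω (rho x y) := by
    intro x hx y hy
    refine le_csInf (hωSne _) ?_
    rintro v ⟨p, hp, rfl⟩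
    exact hp.2.2 x hx y hy
  have hω_zero : ω 0 = 0 := by
    refine le_antisymm ?_ (hω_nonneg 0 le_rfl)
    refine le_of_forall_pos_le_add ?_
    intro ε hε
    obtain ⟨c, hc0, hc⟩ := hgood ε hε
    have := hω_le _ hc 0 le_rfl
    simpa using this
  have hω_mono : ∀ {t t' : ℝ}, 0 ≤ t → t ≤ t' → ω t ≤ ω t' := by
    intro t t' ht htt
    refine le_csInf (hωSne t') ?_
    rintro v ⟨p, hp, rfl⟩
    show ω t ≤ p.1 + p.2 * t'
    have h1 := hω_le p hp t ht
    have h2 : p.2 * t ≤ p.2 * t' := mul_le_mul_of_nonneg_left htt hp.2.1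
    linarith
  have hω_subadd : ∀ {s t : ℝ}, 0 ≤ s → 0 ≤ t → ω (s + t) ≤ ω s + ω t := by
    intro s t hs ht
    have key : ∀ p ∈ good, ∀ q ∈ good,
        ω (s + t) ≤ (p.1 + p.2 * s) + (q.1 + q.2 * t) := by
      intro p hp q hq
      rcases le_total p.2 q.2 with hpq | hpq
      · have hmem : ((p.1 + q.1, p.2) : ℝ × ℝ) ∈ good := by
          refine ⟨by have := hp.1; have := hq.1; simp only; linarith, hp.2.1, ?_⟩
          intro x hx y hy
          have := hp.2.2 x hx y hy
          have := hq.1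
          simp only; linarith
        have := hω_le _ hmem (s + t) (by linarith)
        have h2 : p.2 * t ≤ q.2 * t := mul_le_mul_of_nonneg_right hpq ht
        simp only at this
        nlinarith
      · have hmem : ((p.1 + q.1, q.2) : ℝ × ℝ) ∈ good := by
          refine ⟨by have := hp.1; have := hq.1; simp only; linarith, hq.2.1, ?_⟩
          intro x hx y hy
          have h1 := hq.2.2 x hx y hy
          have := hp.1
          simp only; linarith
        have := hω_le _ hmem (s + t) (by linarith)
        have h2 : q.2 * s ≤ p.2 * s := mul_le_mul_of_nonneg_right hpq hs
        simp only at this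
        nlinarith
    -- now take infima
    have step1 : ∀ q ∈ good, ω (s + t) - (q.1 + q.2 * t) ≤ ω s := by
      intro q hq
      refine le_csInf (hωSne s) ?_
      rintro v ⟨p, hp, rfl⟩
      show ω (s + t) - (q.1 + q.2 * t) ≤ p.1 + p.2 * s
      have := key p hp q hq
      linarith
    have step2 : ω (s + t) - ω s ≤ ω t := by
      refine le_csInf (hωSne t) ?_
      rintro v ⟨q, hq, rfl⟩
      show ω (s + t) - ω s ≤ q.1 + q.2 * t
      have := step1 q hq
      linarith
    linarith
  have hω_bdd : ∀ t : ℝ, 0 ≤ t → ω t ≤ 2 * M + 1 := by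
    intro t ht
    have := hω_le _ hgood0 t ht
    simpa using this
  -- the extension F
  set F : E3 → ℝ := fun x => sInf ((fun y => f y + ω (rho x y)) '' K) with hF_def
  have hFSne : ∀ x : E3, ((fun y => f y + ω (rho x y)) '' K).Nonempty :=
    fun x => ⟨_, ⟨hne.choose, hne.choose_spec, rfl⟩⟩
  have hFSbdd : ∀ x : E3, BddBelow ((fun y => f y + ω (rho x y)) '' K) := by
    intro x
    refine ⟨-M, ?_⟩
    rintro v ⟨y, hy, rfl⟩
    show -M ≤ f y + ω (rho x y)
    have h1 := (abs_le.mp (hM y hy)).1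
    have h2 := hω_nonneg _ (rho_nonneg x y)
    linarith
  have hF_le : ∀ (x : E3), ∀ y ∈ K, F x ≤ f y + ω (rho x y) :=
    fun x y hy => csInf_le (hFSbdd x) ⟨y, hy, rfl⟩
  have hF_lb : ∀ x : E3, -M ≤ F x := by
    intro x
    refine le_csInf (hFSne x) ?_
    rintro v ⟨y, hy, rfl⟩
    show -M ≤ f y + ω (rho x y)
    have h1 := (abs_le.mp (hM y hy)).1
    have h2 := hω_nonneg _ (rho_nonneg x y)
    linarith
  have hF_ub : ∀ x : E3, F x ≤ 3 * M + 1 := by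
    intro x
    have h1 := hF_le x hne.choose hne.choose_spec
    have h2 := (abs_le.mp (hM _ hne.choose_spec)).2
    have h3 := hω_bdd _ (rho_nonneg x hne.choose)
    linarith
  have hF_pin : ∀ x ∈ K, F x = f x := by
    intro x hx
    refine le_antisymm ?_ ?_
    · have := hF_le x x hx
      rw [rho_self, hω_zero] at this
      linarith
    · refine le_csInf (hFSne x) ?_
      rintro v ⟨y, hy, rfl⟩
      show f x ≤ f y + ω (rho x y)
      have := hω_key x hx y hy
      linarith
  have hF_mono : ∀ (a b : ℝ) {z z' : ℝ}, z ≤ z' → F (a, b, z) ≤ F (a, b, z') := by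
    intro a b z z' hzz
    refine le_csInf (hFSne _) ?_
    rintro v ⟨y, hy, rfl⟩
    show F (a, b, z) ≤ f y + ω (rho (a, b, z') y)
    have h1 := hF_le (a, b, z) y hy
    have h2 := hω_mono (rho_nonneg (a, b, z) y) (rho_mono_z a b y hzz)
    linarith
  have hF_lip : ∀ x x' : E3, F x ≤ F x' + ω (rho x x') := by
    intro x x'
    have : ∀ y ∈ K, F x - ω (rho x x') ≤ f y + ω (rho x' y) := by
      intro y hy
      have h1 := hF_le x y hy
      have h2 : rho x y ≤ rho x x' + rho x' y := rho_triangle x x' y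
      have h3 := hω_mono (rho_nonneg x y) h2
      have h4 := hω_subadd (rho_nonneg x x') (rho_nonneg x' y)
      linarith
    have : F x - ω (rho x x') ≤ F x' := by
      refine le_csInf (hFSne x') ?_
      rintro v ⟨y, hy, rfl⟩
      exact this y hy
    linarith
  have hF_cont : Continuous F := by
    rw [Metric.continuous_iff]
    intro x ε hε
    obtain ⟨c, hc0, hc⟩ := hgood (ε / 2) (by linarith)
    refine ⟨ε / (2 * (2 * c + 1)), by positivity, fun x' hx' => ?_⟩
    have hkey : ∀ u v : E3, dist u v < ε / (2 * (2 * c + 1)) → F u - F v ≤ ε / 2 + (2 * c + 1) * dist u v := by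
      intro u v huv
      have h1 := hF_lip u v
      have h2 := hω_le _ hc (rho u v) (rho_nonneg u v)
      have h3 := rho_le_dist u v
      have h4 : c * rho u v ≤ c * (2 * dist u v) := mul_le_mul_of_nonneg_left h3 hc0
      have h5 : (0:ℝ) ≤ dist u v := dist_nonneg
      simp only at h2
      nlinarith
    have hd : dist x' x < ε / (2 * (2 * c + 1)) := hx'
    have hd' : dist x x' < ε / (2 * (2 * c + 1)) := by rwa [dist_comm]
    have h1 := hkey x' x hd
    have h2 := hkey x x' hd'
    rw [dist_comm x x'] at h2
    have h3 : (2 * c + 1) * dist x' x < (2 * c + 1) * (ε / (2 * (2 * c + 1))) :=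
      mul_lt_mul_of_pos_left hd (by linarith)
    have h4 : (2 * c + 1) * (ε / (2 * (2 * c + 1))) = ε / 2 := by
      field_simp
    rw [Real.dist_eq, abs_lt]
    constructor
    · linarith
    · linarith
  refine ⟨F, 3 * M + 1, hF_cont, hF_pin, hF_mono, fun x => ?_⟩
  rw [abs_le]
  constructor
  · have := hF_lb x; linarith
  · exact hF_ub x


lemma continuous_height : Continuous height := by unfold height; fun_prop

/-- clamp to [0,1] -/
def cl (t : ℝ) : ℝ := max 0 (min t 1)

lemma cl_cont : Continuous cl := by unfold cl; fun_prop
lemma cl_nonneg (t : ℝ) : 0 ≤ cl t := le_max_left _ _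
lemma cl_le_one (t : ℝ) : cl t ≤ 1 := by
  unfold cl
  rcases le_total t 1 with h | h
  · rw [min_eq_left h]; rcases le_total 0 t with h' | h'
    · rw [max_eq_right h']; exact h
    · rw [max_eq_left h']; linarith
  · rw [min_eq_right h]; simp
lemma cl_zero : cl 0 = 0 := by norm_num [cl]
lemma cl_one : cl 1 = 1 := by norm_num [cl]

theorem main_test (k₁ k₂ : Set E3)
    (hIsKnot : Nonempty (k₁ ≃ₜ Circle))
    (hSeg : ∃ S : Finset (E3 × E3), k₁ = ⋃ p ∈ S, segment ℝ p.1 p.2)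
    (φ : E3 → E3)
    (hφbij : Set.BijOn φ k₁ k₂)
    (hφcont : ContinuousOn φ k₁)
    (hproj : ∀ x ∈ k₁, projXY (φ x) = projXY x)
    (hheight : ∀ x ∈ k₁, ∀ y ∈ k₁, x ≠ y → projXY x = projXY y →
      0 < (height x - height y) * (height (φ x) - height (φ y))) :
    ∃ H : (Icc (0:ℝ) 1) × E3 → E3,
      Continuous H ∧
      (∀ t : Icc (0:ℝ) 1, IsHomeomorph fun x => H (t, x)) ∧
      (∀ x, H (⟨0, by simp⟩, x) = x) ∧
      (fun x => H (⟨1, by simp⟩, x)) '' k₁ = k₂ := by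
  classical
  -- compactness and nonemptiness
  have hseg : ∀ p : E3 × E3, IsCompact (segment ℝ p.1 p.2) := by
    intro p
    rw [segment_eq_image]
    exact isCompact_Icc.image (by fun_prop)
  obtain ⟨S, hSeq⟩ := hSeg
  have hk₁c : IsCompact k₁ := by
    rw [hSeq]
    exact S.finite_toSet.isCompact_biUnion (fun p _ => hseg p)
  have hne₁ : k₁.Nonempty := by
    obtain ⟨e⟩ := hIsKnot
    exact ⟨(e.symm 1 : k₁), (e.symm 1).2⟩
  have hk₂eq : φ '' k₁ = k₂ := hφbij.image_eq
  have hk₂c : IsCompact k₂ := by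
    rw [← hk₂eq]; exact hk₁c.image_of_continuousOn hφcont
  have hne₂ : k₂.Nonempty := by
    rw [← hk₂eq]; exact hne₁.image φ
  -- the inverse homeomorphism on subtypes
  have hmaps : Set.MapsTo φ k₁ k₂ := hφbij.mapsTo
  haveI : CompactSpace ↥k₁ := isCompact_iff_compactSpace.mp hk₁c
  have hφr_cont : Continuous (hmaps.restrict φ k₁ k₂) := hφcont.mapsToRestrict hmaps
  have hφr_bij : Function.Bijective (hmaps.restrict φ k₁ k₂) := hφbij.bijective
  set homeo : ↥k₁ ≃ₜ ↥k₂ :=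
    Continuous.homeoOfEquivCompactToT2 (f := Equiv.ofBijective _ hφr_bij) hφr_cont with hhomeo_def
  have hhomeo_app : ∀ (x : E3) (hx : x ∈ k₁), homeo ⟨x, hx⟩ = ⟨φ x, hmaps hx⟩ := by
    intro x hx; rfl
  -- f₁ : Tietze extension of height ∘ φ
  have hf₁₀cont : ContinuousOn (fun x => height (φ x)) k₁ :=
    continuous_height.comp_continuousOn hφcont
  obtain ⟨g₁c, hg₁c⟩ := ContinuousMap.exists_restrict_eq (hk₁c.isClosed)
    (⟨k₁.restrict (fun x => height (φ x)), hf₁₀cont.restrict⟩ : C(↥k₁, ℝ))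
  set g₁ : E3 → ℝ := ⇑g₁c with hg₁_def
  have hg₁ : ∀ x ∈ k₁, g₁ x = height (φ x) := by
    intro x hx
    exact DFunLike.congr_fun hg₁c (⟨x, hx⟩ : ↥k₁)
  -- f₂ : Tietze extension of height ∘ φ⁻¹
  set f₂₀ : E3 → ℝ :=
    fun u => if hu : u ∈ k₂ then height ((homeo.symm ⟨u, hu⟩ : ↥k₁) : E3) else 0 with hf₂₀_def
  have hf₂₀pin : ∀ x ∈ k₁, f₂₀ (φ x) = height x := by
    intro x hx
    have h1 : φ x ∈ k₂ := hmaps hx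
    have h2 : homeo.symm ⟨φ x, h1⟩ = ⟨x, hx⟩ := by
      apply homeo.injective
      rw [Homeomorph.apply_symm_apply, hhomeo_app]
    rw [hf₂₀_def]
    simp only [dif_pos h1, h2]
  have hf₂₀cont : ContinuousOn f₂₀ k₂ := by
    rw [continuousOn_iff_continuous_restrict]
    have : k₂.domRestrict f₂₀ = fun u : ↥k₂ => height ((homeo.symm u : ↥k₁) : E3) := by
      funext u
      show f₂₀ ↑u = _
      rw [hf₂₀_def]
      simp only [dif_pos u.2, Subtype.coe_eta]
    rw [this]
    exact continuous_height.comp (continuous_subtype_val.comp homeo.symm.continuous)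
  obtain ⟨g₂c, hg₂c⟩ := ContinuousMap.exists_restrict_eq (hk₂c.isClosed)
    (⟨k₂.restrict f₂₀, hf₂₀cont.restrict⟩ : C(↥k₂, ℝ))
  set g₂ : E3 → ℝ := ⇑g₂c with hg₂_def
  have hg₂ : ∀ u ∈ k₂, g₂ u = f₂₀ u := by
    intro u hu
    exact DFunLike.congr_fun hg₂c (⟨u, hu⟩ : ↥k₂)
  -- monotonicity hypotheses
  have hmono₁ : ∀ x ∈ k₁, ∀ y ∈ k₁, projXY x = projXY y → height x ≤ height y →
      g₁ x ≤ g₁ y := by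
    intro x hx y hy hp hh
    rw [hg₁ x hx, hg₁ y hy]
    by_cases hxy : x = y
    · rw [hxy]
    · have hprod := hheight x hx y hy hxy hp
      rcases mul_pos_iff.mp hprod with ⟨h1, h2⟩ | ⟨h1, h2⟩
      · linarith
      · linarith
  have hmono₂ : ∀ u ∈ k₂, ∀ v ∈ k₂, projXY u = projXY v → height u ≤ height v →
      g₂ u ≤ g₂ v := by
    intro u hu v hv hp hh
    obtain ⟨x, hx, rfl⟩ : ∃ x ∈ k₁, φ x = u := by
      rw [← hk₂eq] at hu; obtain ⟨x, hx, h⟩ := hu; exact ⟨x, hx, h⟩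
    obtain ⟨y, hy, rfl⟩ : ∃ y ∈ k₁, φ y = v := by
      rw [← hk₂eq] at hv; obtain ⟨y, hy, h⟩ := hv; exact ⟨y, hy, h⟩
    rw [hg₂ _ hu, hg₂ _ hv, hf₂₀pin x hx, hf₂₀pin y hy]
    by_cases hxy : x = y
    · rw [hxy]
    · have hpxy : projXY x = projXY y := by
        rw [← hproj x hx, ← hproj y hy, hp]
      have hprod := hheight x hx y hy hxy hpxy
      rcases mul_pos_iff.mp hprod with ⟨h1, h2⟩ | ⟨h1, h2⟩
      · linarith
      · linarith
  -- the two monotone extensions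
  obtain ⟨F₁, A₁, hF₁cont, hF₁pin, hF₁mono, hF₁bdd⟩ :=
    exists_mono_extension k₁ hk₁c hne₁ g₁ g₁c.continuous hmono₁
  obtain ⟨F₂, A₂, hF₂cont, hF₂pin, hF₂mono, hF₂bdd⟩ :=
    exists_mono_extension k₂ hk₂c hne₂ g₂ g₂c.continuous hmono₂
  have hA₂0 : 0 ≤ A₂ := (abs_nonneg _).trans (hF₂bdd (0, 0, 0))
  -- global vertical homeomorphism for F₂, with time parameter
  obtain ⟨e₂, he₂⟩ := vert (X := ℝ × ℝ × ℝ)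
    (fun p => cl p.1.1 * F₂ (p.1.2.1, p.1.2.2, p.2))
    ((cl_cont.comp (continuous_fst.comp continuous_fst)).mul (hF₂cont.comp
      (((continuous_fst.comp continuous_snd).comp continuous_fst).prodMk
        ((((continuous_snd.comp continuous_snd).comp continuous_fst)).prodMk
          continuous_snd))))
    A₂
    (by
      intro p
      rw [abs_mul]
      calc |cl p.1.1| * |F₂ (p.1.2.1, p.1.2.2, p.2)| ≤ 1 * A₂ := by
            refine mul_le_mul ?_ (hF₂bdd _) (abs_nonneg _) zero_le_one
            rw [abs_of_nonneg (cl_nonneg _)]; exact cl_le_one _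
        _ = A₂ := one_mul _)
    (by
      intro x z z' hzz
      exact mul_le_mul_of_nonneg_left (hF₂mono _ _ hzz) (cl_nonneg _))
  have he₂inv : ∀ (t' : ℝ) (w : ℝ × ℝ) (u ζ : ℝ),
      ζ + cl t' * F₂ (w.1, w.2, ζ) = u → e₂.symm ((t', w), u) = ((t', w), ζ) := by
    intro t' w u ζ hζ
    apply e₂.injective
    rw [Homeomorph.apply_symm_apply, he₂]
    exact Prod.ext rfl hζ.symm
  -- definition of the isotopy
  set H : (Icc (0:ℝ) 1) × E3 → E3 := fun q =>
    (q.2.1, q.2.2.1,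
      (e₂.symm ((((q.1 : ℝ), (q.2.1, q.2.2.1)) : ℝ × ℝ × ℝ),
        q.2.2.2 + cl (q.1 : ℝ) * F₁ q.2)).2) with hH_def
  refine ⟨H, ?_, ?_, ?_, ?_⟩
  · -- continuity
    rw [hH_def]
    have ha : Continuous fun q : (Icc (0:ℝ) 1) × E3 => (q.1 : ℝ) :=
      continuous_subtype_val.comp continuous_fst
    have hb1 : Continuous fun q : (Icc (0:ℝ) 1) × E3 => q.2.1 :=
      continuous_fst.comp continuous_snd
    have hb2 : Continuous fun q : (Icc (0:ℝ) 1) × E3 => q.2.2.1 :=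
      (continuous_fst.comp continuous_snd).comp continuous_snd
    have hb3 : Continuous fun q : (Icc (0:ℝ) 1) × E3 => q.2.2.2 :=
      (continuous_snd.comp continuous_snd).comp continuous_snd
    have h1 : Continuous fun q : (Icc (0:ℝ) 1) × E3 =>
        ((((q.1 : ℝ), (q.2.1, q.2.2.1)) : ℝ × ℝ × ℝ),
          q.2.2.2 + cl (q.1 : ℝ) * F₁ q.2) :=
      (ha.prodMk (hb1.prodMk hb2)).prodMk
        (hb3.add ((cl_cont.comp ha).mul (hF₁cont.comp continuous_snd)))
    have h2 : Continuous fun q : (Icc (0:ℝ) 1) × E3 => (e₂.symm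
        ((((q.1 : ℝ), (q.2.1, q.2.2.1)) : ℝ × ℝ × ℝ),
          q.2.2.2 + cl (q.1 : ℝ) * F₁ q.2)).2 :=
      continuous_snd.comp (e₂.symm.continuous.comp h1)
    exact hb1.prodMk (hb2.prodMk h2)
  · -- each time is a homeomorphism
    intro t
    obtain ⟨e₁s, he₁s⟩ := vert (X := ℝ × ℝ)
      (fun p => cl (t : ℝ) * F₁ (p.1.1, p.1.2, p.2))
      (continuous_const.mul (hF₁cont.comp
        ((continuous_fst.comp continuous_fst).prodMk
          ((continuous_snd.comp continuous_fst).prodMk continuous_snd)))) A₁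
      (by
        intro p
        rw [abs_mul]
        have hA₁0 : 0 ≤ A₁ := (abs_nonneg _).trans (hF₁bdd (0, 0, 0))
        calc |cl (t:ℝ)| * |F₁ (p.1.1, p.1.2, p.2)| ≤ 1 * A₁ := by
              refine mul_le_mul ?_ (hF₁bdd _) (abs_nonneg _) zero_le_one
              rw [abs_of_nonneg (cl_nonneg _)]; exact cl_le_one _
          _ = A₁ := one_mul _)
      (fun x _ _ hzz => mul_le_mul_of_nonneg_left (hF₁mono _ _ hzz) (cl_nonneg _))
    obtain ⟨e₂s, he₂s⟩ := vert (X := ℝ × ℝ)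
      (fun p => cl (t : ℝ) * F₂ (p.1.1, p.1.2, p.2))
      (continuous_const.mul (hF₂cont.comp
        ((continuous_fst.comp continuous_fst).prodMk
          ((continuous_snd.comp continuous_fst).prodMk continuous_snd)))) A₂
      (by
        intro p
        rw [abs_mul]
        calc |cl (t:ℝ)| * |F₂ (p.1.1, p.1.2, p.2)| ≤ 1 * A₂ := by
              refine mul_le_mul ?_ (hF₂bdd _) (abs_nonneg _) zero_le_one
              rw [abs_of_nonneg (cl_nonneg _)]; exact cl_le_one _
          _ = A₂ := one_mul _)
      (fun x _ _ hzz => mul_le_mul_of_nonneg_left (hF₂mono _ _ hzz) (cl_nonneg _))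
    have he₂s_fst : ∀ y, (e₂s.symm y).1 = y.1 := by
      intro y
      have h := he₂s (e₂s.symm y)
      rw [e₂s.apply_symm_apply] at h
      exact (congrArg Prod.fst h).symm
    have hslice : ∀ (w : ℝ × ℝ) (u : ℝ),
        e₂.symm (((t : ℝ), w), u) = (((t : ℝ), w), (e₂s.symm (w, u)).2) := by
      intro w u
      have hp1 : (e₂s.symm (w, u)).1 = w := he₂s_fst (w, u)
      refine he₂inv (t : ℝ) w u _ ?_
      have h := he₂s (e₂s.symm (w, u))
      rw [e₂s.apply_symm_apply] at h
      have h2 := congrArg Prod.snd h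
      simp only at h2
      rw [hp1] at h2
      exact h2.symm
    set total : E3 ≃ₜ E3 :=
      ((Homeomorph.prodAssoc ℝ ℝ ℝ).symm.trans
        (e₁s.trans (e₂s.symm.trans (Homeomorph.prodAssoc ℝ ℝ ℝ)))) with htotal_def
    have heq : (fun x => H (t, x)) = ⇑total := by
      funext x
      have step1 : e₁s ((x.1, x.2.1), x.2.2)
          = ((x.1, x.2.1), x.2.2 + cl (t:ℝ) * F₁ x) := he₁s _
      have hp : e₂s.symm ((x.1, x.2.1), x.2.2 + cl (t:ℝ) * F₁ x)
          = ((x.1, x.2.1), (e₂s.symm ((x.1, x.2.1), x.2.2 + cl (t:ℝ) * F₁ x)).2) :=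
        Prod.ext (he₂s_fst _) rfl
      show (x.1, x.2.1, (e₂.symm (((t:ℝ), (x.1, x.2.1)), x.2.2 + cl (t:ℝ) * F₁ x)).2)
        = (Homeomorph.prodAssoc ℝ ℝ ℝ) (e₂s.symm (e₁s ((x.1, x.2.1), x.2.2)))
      rw [hslice (x.1, x.2.1) (x.2.2 + cl (t:ℝ) * F₁ x), step1, hp]
      rfl
    rw [heq]
    exact total.isHomeomorph
  · -- identity at time 0
    intro x
    rw [hH_def]
    show (x.1, x.2.1, (e₂.symm (((0:ℝ), (x.1, x.2.1)), x.2.2 + cl 0 * F₁ x)).2) = x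
    rw [cl_zero, zero_mul, add_zero]
    rw [he₂inv 0 (x.1, x.2.1) x.2.2 x.2.2 (by rw [cl_zero, zero_mul, add_zero])]
  · -- image at time 1
    have hone : ∀ x ∈ k₁, H (⟨1, by simp⟩, x) = φ x := by
      intro x hx
      rw [hH_def]
      show (x.1, x.2.1, (e₂.symm (((1:ℝ), (x.1, x.2.1)), x.2.2 + cl 1 * F₁ x)).2) = φ x
      have hproj' := hproj x hx
      have hp1 : (φ x).1 = x.1 := congrArg (Prod.fst : ℝ × ℝ → ℝ) hproj'
      have hp2 : (φ x).2.1 = x.2.1 := congrArg (Prod.snd : ℝ × ℝ → ℝ) hproj'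
      have hF₁x : F₁ x = (φ x).2.2 := by
        rw [hF₁pin x hx, hg₁ x hx]; rfl
      have hφmem : φ x ∈ k₂ := hmaps hx
      have hF₂φ : F₂ (φ x) = x.2.2 := by
        rw [hF₂pin _ hφmem, hg₂ _ hφmem, hf₂₀pin x hx]; rfl
      have hζ : (φ x).2.2 + cl 1 * F₂ ((x.1, x.2.1).1, (x.1, x.2.1).2, (φ x).2.2)
          = x.2.2 + cl 1 * F₁ x := by
        have harg : ((x.1, x.2.1).1, (x.1, x.2.1).2, (φ x).2.2) = φ x := by
          refine Prod.ext ?_ (Prod.ext ?_ rfl)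
          · exact hp1.symm
          · exact hp2.symm
        rw [harg, hF₂φ, hF₁x, cl_one, one_mul, one_mul, add_comm]
      rw [he₂inv 1 (x.1, x.2.1) (x.2.2 + cl 1 * F₁ x) ((φ x).2.2) hζ]
      show (x.1, x.2.1, (φ x).2.2) = φ x
      refine Prod.ext hp1.symm (Prod.ext hp2.symm rfl)
    rw [← hk₂eq]
    exact Set.image_congr hone

end SameDiagramAux
end

/-- Proposition: two polygonal knots admitting a polygonal homeomorphism that preserves the
projection to the plane and the relative heights over each multiple point of the projection
are ambient isotopic.  The homeomorphism is given as a map `φ : ℝ³ → ℝ³` that restricts to a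
homeomorphism of `k₁` onto `k₂` (continuity of the inverse is automatic by compactness), and
polygonality of `φ` means some subdivision of `k₁` into segments is mapped by `φ` to segments
contained in `k₂`. -/
theorem same_diagram_isotopic (k₁ k₂ : Set E3)
    (h₁ : IsPolygonalKnot k₁) (h₂ : IsPolygonalKnot k₂)
    (φ : E3 → E3)
    (hφbij : Set.BijOn φ k₁ k₂)
    (hφcont : ContinuousOn φ k₁)
    (hφpoly : ∃ S : Finset (E3 × E3),
      k₁ = ⋃ p ∈ S, segment ℝ p.1 p.2 ∧
      ∀ p ∈ S, ∃ q₁ q₂ : E3, φ '' segment ℝ p.1 p.2 = segment ℝ q₁ q₂)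
    (hproj : ∀ x ∈ k₁, projXY (φ x) = projXY x)
    (hheight : ∀ x ∈ k₁, ∀ y ∈ k₁, x ≠ y → projXY x = projXY y →
      0 < (height x - height y) * (height (φ x) - height (φ y))) :
    AmbientIsotopic k₁ k₂ := by
  obtain ⟨hknot, hsegs⟩ := h₁
  exact SameDiagramAux.main_test k₁ k₂ hknot hsegs φ hφbij hφcont hproj hheight
end

section
/- Let k₁ and k₂ be polygonal knots in ℝ³ and let φ : k₁ → k₂ be a homeomorphism satisfying: (1) p(φ(x)) = p(x) for every x ∈ k₁; and (2) whenever x, y ∈ k₁ with x ≠ y and p(x) = p(y), one has (h(x) − h(y))·(h(φ(x)) − h(φ(y))) > 0. Then for every t ∈ [0,1] the map x ↦ (1−t)·x + t·φ(x) is injective on k₁, so that jₜ := {(1−t)·x + t·φ(x) : x ∈ k₁} is a knot in ℝ³; moreover j₀ = k₁ and j₁ = k₂. -/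
open Set

/-- Proposition: under the hypotheses of the same-diagram proposition, the straight-line
interpolation `x ↦ (1-t)·x + t·φ(x)` is injective on `k₁` for every `t ∈ [0,1]`, its image
`jₜ` is a knot, and `j₀ = k₁`, `j₁ = k₂`. -/
theorem straight_line_isotopy (k₁ k₂ : Set E3)
    (h₁ : IsPolygonalKnot k₁) (h₂ : IsPolygonalKnot k₂)
    (φ : E3 → E3)
    (hφbij : Set.BijOn φ k₁ k₂)
    (hφcont : ContinuousOn φ k₁)
    (hproj : ∀ x ∈ k₁, projXY (φ x) = projXY x)
    (hheight : ∀ x ∈ k₁, ∀ y ∈ k₁, x ≠ y → projXY x = projXY y →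
      0 < (height x - height y) * (height (φ x) - height (φ y))) :
    (∀ t ∈ Icc (0:ℝ) 1,
      Set.InjOn (fun x : E3 => (1 - t) • x + t • φ x) k₁ ∧
      IsKnot ((fun x : E3 => (1 - t) • x + t • φ x) '' k₁)) ∧
    (fun x : E3 => (1 - (0:ℝ)) • x + (0:ℝ) • φ x) '' k₁ = k₁ ∧
    (fun x : E3 => (1 - (1:ℝ)) • x + (1:ℝ) • φ x) '' k₁ = k₂ := by

  constructor
  · intro t ht
    set f : E3 → E3 := fun x : E3 => (1 - t) • x + t • φ x with hf
    have hfproj : ∀ x ∈ k₁, (f x).1 = x.1 ∧ (f x).2.1 = x.2.1 := by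
      intro x hx
      have := hproj x hx
      simp only [projXY, Prod.mk.injEq] at this
      simp [hf, Prod.smul_def, Prod.add_def, smul_eq_mul, this.1, this.2]
      constructor <;> ring
    have hinj : Set.InjOn f k₁ := by
      intro x hx y hy hxy
      have hx1 := hfproj x hx
      have hy1 := hfproj y hy
      have e1 : x.1 = y.1 := by rw [← hx1.1, ← hy1.1, hxy]
      have e2 : x.2.1 = y.2.1 := by rw [← hx1.2, ← hy1.2, hxy]
      by_contra hne
      have hpp : projXY x = projXY y := by simp [projXY, e1, e2]
      have hh := hheight x hx y hy hne hpp
      have e3 : (1 - t) * x.2.2 + t * (φ x).2.2 = (1 - t) * y.2.2 + t * (φ y).2.2 := by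
        have := congrArg (fun z : E3 => z.2.2) hxy
        simpa [hf, Prod.smul_def, Prod.add_def, smul_eq_mul] using this
      simp only [height] at hh
      obtain ⟨ht0, ht1⟩ := ht
      have ha : (1 - t) * (x.2.2 - y.2.2) + t * ((φ x).2.2 - (φ y).2.2) = 0 := by linarith
      have k1 : (x.2.2 - y.2.2) * ((1 - t) * (x.2.2 - y.2.2) + t * ((φ x).2.2 - (φ y).2.2)) = 0 := by
        rw [ha]; ring
      have k2 : ((φ x).2.2 - (φ y).2.2) * ((1 - t) * (x.2.2 - y.2.2) + t * ((φ x).2.2 - (φ y).2.2)) = 0 := by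
        rw [ha]; ring
      nlinarith [k1, k2, hh, mul_nonneg (by linarith : (0:ℝ) ≤ 1 - t) (sq_nonneg (x.2.2 - y.2.2)),
        mul_nonneg ht0 (sq_nonneg ((φ x).2.2 - (φ y).2.2))]
    refine ⟨hinj, ?_⟩
    obtain ⟨e⟩ := h₁.1
    haveI : CompactSpace k₁ := e.symm.compactSpace
    have hfc : ContinuousOn f k₁ := by
      rw [hf]; fun_prop
    let g : k₁ → (f '' k₁) := fun x => ⟨f x, Set.mem_image_of_mem f x.2⟩
    have hgc : Continuous g := Continuous.subtype_mk hfc.restrict _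
    have hgbij : Function.Bijective g := by
      constructor
      · intro a b hab
        exact Subtype.ext (hinj a.2 b.2 (congrArg Subtype.val hab))
      · rintro ⟨_, x, hx, rfl⟩
        exact ⟨⟨x, hx⟩, rfl⟩
    let g' : k₁ ≃ (f '' k₁) := Equiv.ofBijective g hgbij
    have hg'c : Continuous g' := hgc
    let G : k₁ ≃ₜ (f '' k₁) := hg'c.homeoOfEquivCompactToT2
    exact ⟨G.symm.trans e⟩
  constructor
  · have : (fun x : E3 => (1 - (0:ℝ)) • x + (0:ℝ) • φ x) = id := by
      funext x; simp
    rw [this, Set.image_id]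
  · have : (fun x : E3 => (1 - (1:ℝ)) • x + (1:ℝ) • φ x) = φ := by
      funext x; simp
    rw [this, hφbij.image_eq]
end

section
/- For every real number μ > 2, the tent map t_μ : ℝ → ℝ is switching; that is, for every map ψ : {1, 2, 3, …} → {−1, 1} there exist real numbers x and y such that for every n ≥ 1 one has t_μ^{n−1}(x) ≠ t_μ^{n−1}(y) and (t_μ^{n−1}(x) − t_μ^{n−1}(y))/|t_μ^{n−1}(x) − t_μ^{n−1}(y)| = ψ(n). -/
open Set

/-- The tent map `t_μ`: `t_μ(z) = μz` for `z ≤ 1/2` and `t_μ(z) = μ(1-z)` for `z ≥ 1/2`. -/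
noncomputable def tentMap (μ : ℝ) : ℝ → ℝ := fun z =>
  if z ≤ 1 / 2 then μ * z else μ * (1 - z)


noncomputable def itinTerm (μ : ℝ) (a : ℕ → Bool) (n k : ℕ) : ℝ :=
  (if a (n + k) then ∏ j ∈ Finset.range k, (if a (n + j) then (-1:ℝ) else 1) else 0) * (1/μ)^k

noncomputable def itinX (μ : ℝ) (a : ℕ → Bool) (n : ℕ) : ℝ := ∑' k : ℕ, itinTerm μ a n k

lemma itinTerm_abs_le (μ : ℝ) (hμ : 0 < μ) (a : ℕ → Bool) (n k : ℕ) :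
    |itinTerm μ a n k| ≤ (1/μ)^k := by
  have hs : |∏ j ∈ Finset.range k, (if a (n + j) then (-1:ℝ) else 1)| = 1 := by
    rw [Finset.abs_prod]
    refine Finset.prod_eq_one fun j _ => ?_
    split <;> simp
  rw [itinTerm, abs_mul, abs_pow, abs_of_pos (by positivity : (0:ℝ) < 1/μ)]
  split
  · rw [hs, one_mul]
  · rw [abs_zero, zero_mul]; positivity

lemma itinTerm_summable (μ : ℝ) (hμ : 2 < μ) (a : ℕ → Bool) (n : ℕ) :
    Summable (itinTerm μ a n) := by
  have h1 : (1/μ) < 1 := by rw [div_lt_one (by linarith)]; linarith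
  refine Summable.of_abs (Summable.of_nonneg_of_le (fun k => abs_nonneg _)
    (fun k => itinTerm_abs_le μ (by linarith) a n k) ?_)
  exact summable_geometric_of_lt_one (by positivity) h1

lemma itinX_rec (μ : ℝ) (hμ : 2 < μ) (a : ℕ → Bool) (n : ℕ) :
    itinX μ a n = if a n then 1 - itinX μ a (n+1) / μ else itinX μ a (n+1) / μ := by
  have hμ0 : (0:ℝ) < μ := by linarith
  have hsum := itinTerm_summable μ hμ a n
  rw [itinX, Summable.tsum_eq_zero_add hsum]
  have h0 : itinTerm μ a n 0 = if a n then 1 else 0 := by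
    simp [itinTerm]
  have hshift : ∀ k, itinTerm μ a n (k+1)
      = (if a n then (-1:ℝ) else 1) * (1/μ) * itinTerm μ a (n+1) k := by
    intro k
    rw [itinTerm, itinTerm]
    have hp : (∏ j ∈ Finset.range (k+1), (if a (n + j) then (-1:ℝ) else 1))
        = (∏ j ∈ Finset.range k, (if a (n + 1 + j) then (-1:ℝ) else 1)) *
          (if a n then (-1:ℝ) else 1) := by
      rw [Finset.prod_range_succ']
      congr 1
      · apply Finset.prod_congr rfl; intro j _
        have h : n + (j + 1) = n + 1 + j := by omega
        rw [h]
    have hidx : n + (k+1) = n + 1 + k := by omega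
    rw [hidx, hp, pow_succ]
    split <;> ring
  simp_rw [hshift]
  rw [tsum_mul_left, h0, ← itinX]
  split <;> ring

lemma itinX_abs_le (μ : ℝ) (hμ : 2 < μ) (a : ℕ → Bool) (n : ℕ) :
    |itinX μ a n| ≤ (1 - 1/μ)⁻¹ := by
  have h1 : (1/μ) < 1 := by rw [div_lt_one (by linarith)]; linarith
  have hg : Summable (fun k : ℕ => (1/μ)^k) := summable_geometric_of_lt_one (by positivity) h1
  have hs : Summable (fun k => |itinTerm μ a n k|) := (itinTerm_summable μ hμ a n).abs
  have h2 : |itinX μ a n| ≤ ∑' k, |itinTerm μ a n k| := by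
    have := norm_tsum_le_tsum_norm (f := itinTerm μ a n) (by simpa using hs)
    simpa [itinX] using this
  have h3 : (∑' k, |itinTerm μ a n k|) ≤ ∑' k : ℕ, (1/μ)^k :=
    Summable.tsum_le_tsum (fun k => itinTerm_abs_le μ (by linarith) a n k) hs hg
  have h4 : (∑' k : ℕ, (1/μ)^k) = (1 - 1/μ)⁻¹ := tsum_geometric_of_lt_one (by positivity) h1
  linarith

lemma itinX_mem (μ : ℝ) (hμ : 2 < μ) (a : ℕ → Bool) (n : ℕ) :
    0 ≤ itinX μ a n ∧ itinX μ a n ≤ 1 := by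
  have hμ0 : (0:ℝ) < μ := by linarith
  have hinv0 : 0 < 1/μ := by positivity
  have hinv1 : 1/μ ≤ 1 := by rw [div_le_one hμ0]; linarith
  set C : ℝ := (1 - 1/μ)⁻¹ with hC
  have hC0 : 0 ≤ C := by
    have : 0 < 1 - 1/μ := by linarith [show (1:ℝ)/μ < 1/2 by rw [div_lt_iff₀ hμ0]; linarith]
    positivity
  have claim : ∀ k m, -C * (1/μ)^k ≤ itinX μ a m ∧ itinX μ a m ≤ 1 + C * (1/μ)^k := by
    intro k
    induction k with
    | zero =>
      intro m
      have := itinX_abs_le μ hμ a m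
      rw [abs_le] at this
      constructor <;> simp <;> linarith [this.1, this.2]
    | succ k ih =>
      intro m
      obtain ⟨ih1, ih2⟩ := ih (m+1)
      have hrec := itinX_rec μ hμ a m
      have hq0 : (0:ℝ) ≤ (1/μ)^k := by positivity
      have hmul1 := mul_le_mul_of_nonneg_right ih1 hinv0.le
      have hmul2 := mul_le_mul_of_nonneg_right ih2 hinv0.le
      rw [pow_succ]
      rw [hrec]
      have hdiv : itinX μ a (m+1) / μ = itinX μ a (m+1) * (1/μ) := by ring
      split <;> rw [hdiv] <;> constructor <;> nlinarith
  constructor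
  · have htend : Filter.Tendsto (fun k : ℕ => -C * (1/μ)^k) Filter.atTop (nhds 0) := by
      have := tendsto_pow_atTop_nhds_zero_of_lt_one hinv0.le
        (by rw [div_lt_one hμ0]; linarith : (1:ℝ)/μ < 1)
      simpa using this.const_mul (-C)
    exact le_of_tendsto htend (Filter.Eventually.of_forall fun k => (claim k n).1)
  · have htend : Filter.Tendsto (fun k : ℕ => 1 + C * (1/μ)^k) Filter.atTop (nhds 1) := by
      have := tendsto_pow_atTop_nhds_zero_of_lt_one hinv0.le
        (by rw [div_lt_one hμ0]; linarith : (1:ℝ)/μ < 1)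
      simpa using (this.const_mul C).const_add 1
    exact ge_of_tendsto htend (Filter.Eventually.of_forall fun k => (claim k n).2)

lemma itinX_branch (μ : ℝ) (hμ : 2 < μ) (a : ℕ → Bool) (n : ℕ) :
    (a n = true → 1 - 1/μ ≤ itinX μ a n ∧ itinX μ a n ≤ 1) ∧
    (a n = false → 0 ≤ itinX μ a n ∧ itinX μ a n ≤ 1/μ) := by
  have hμ0 : (0:ℝ) < μ := by linarith
  have hmem := itinX_mem μ hμ a (n+1)
  have hrec := itinX_rec μ hμ a n
  have h1 : itinX μ a (n+1) / μ ≤ 1/μ := by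
    apply div_le_div_of_nonneg_right ?_ hμ0.le
    · exact hmem.2
  have h2 : 0 ≤ itinX μ a (n+1) / μ := div_nonneg hmem.1 hμ0.le
  constructor <;> intro h <;> rw [h] at hrec <;> simp at hrec <;> rw [hrec] <;>
    constructor <;> linarith

lemma itinX_iterate (μ : ℝ) (hμ : 2 < μ) (a : ℕ → Bool) (n : ℕ) :
    (tentMap μ)^[n] (itinX μ a 0) = itinX μ a n := by
  have hμ0 : (0:ℝ) < μ := by linarith
  have hinv : (1:ℝ)/μ < 1/2 := by rw [div_lt_div_iff₀ hμ0 (by norm_num)]; linarith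
  have hstep : ∀ m, tentMap μ (itinX μ a m) = itinX μ a (m+1) := by
    intro m
    have hrec := itinX_rec μ hμ a m
    have hbr := itinX_branch μ hμ a m
    cases ha : a m with
    | true =>
      have hb := hbr.1 ha
      have hgt : ¬ (itinX μ a m ≤ 1/2) := by push_neg; linarith [hb.1]
      rw [ha] at hrec; simp at hrec
      rw [tentMap, if_neg hgt, hrec]
      field_simp
      ring
    | false =>
      have hb := hbr.2 ha
      have hle : itinX μ a m ≤ 1/2 := by linarith [hb.2]
      rw [ha] at hrec; simp at hrec
      rw [tentMap, if_pos hle, hrec]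
      field_simp
  induction n with
  | zero => simp
  | succ n ih => rw [Function.iterate_succ_apply', ih, hstep]

/-- A continuous map `f : ℝ → ℝ` is switching if for every sign sequence `ψ : ℕ → {-1, 1}`
(indexed so that `ψ n` prescribes the sign at the `n`-th iterate, `n ≥ 0`) there are reals
`x, y` with `fⁿ(x) ≠ fⁿ(y)` and `(fⁿ(x) - fⁿ(y)) / |fⁿ(x) - fⁿ(y)| = ψ n` for every `n`. -/
def Switching (f : ℝ → ℝ) : Prop :=
  Continuous f ∧
  ∀ ψ : ℕ → ℝ, (∀ n, ψ n = -1 ∨ ψ n = 1) →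
    ∃ x y : ℝ, ∀ n : ℕ,
      f^[n] x ≠ f^[n] y ∧ (f^[n] x - f^[n] y) / |f^[n] x - f^[n] y| = ψ n

/-- Proposition: for every `μ > 2` the tent map `t_μ` is switching. -/
theorem tentMap_switching (μ : ℝ) (hμ : 2 < μ) : Switching (tentMap μ) := by
  classical
  have hμ0 : (0:ℝ) < μ := by linarith
  have hinv : (1:ℝ)/μ < 1/2 := by rw [div_lt_div_iff₀ hμ0 (by norm_num)]; linarith
  constructor
  · unfold tentMap
    apply Continuous.if_le (by continuity) (by continuity) continuous_id continuous_const
    intro x hx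
    simp only [id] at hx
    rw [hx]; ring
  · intro ψ hψ
    set a : ℕ → Bool := fun n => if ψ n = 1 then true else false with ha
    set b : ℕ → Bool := fun n => !(a n) with hb
    refine ⟨itinX μ a 0, itinX μ b 0, fun n => ?_⟩
    rw [itinX_iterate μ hμ a n, itinX_iterate μ hμ b n]
    rcases hψ n with hψn | hψn
    · have han : a n = false := by simp [ha, hψn]; norm_num
      have hbn : b n = true := by simp [hb, han]
      have hxa := (itinX_branch μ hμ a n).2 han
      have hxb := (itinX_branch μ hμ b n).1 hbn
      have hlt : itinX μ a n - itinX μ b n < 0 := by linarith [hxa.2, hxb.1]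
      refine ⟨by intro h; rw [h] at hlt; simp at hlt, ?_⟩
      rw [abs_of_neg hlt, hψn, div_neg, div_self hlt.ne]
    · have han : a n = true := by simp [ha, hψn]
      have hbn : b n = false := by simp [hb, han]
      have hxa := (itinX_branch μ hμ a n).1 han
      have hxb := (itinX_branch μ hμ b n).2 hbn
      have hlt : 0 < itinX μ a n - itinX μ b n := by linarith [hxa.1, hxb.2]
      refine ⟨by intro h; rw [h] at hlt; simp at hlt, ?_⟩
      rw [abs_of_pos hlt, div_self hlt.ne', hψn]
end

section
/- Let μ > 2 and let C_μ = {x ∈ ℝ : t_μⁿ(x) ∈ [0,1] for every integer n ≥ 0}. Then for every x ∈ C_μ and every n ≥ 0 one has t_μⁿ(x) ≠ 1/2, and the itinerary map s : C_μ → {0,1}^ℕ defined by s(x)(n) = 0 if t_μⁿ(x) < 1/2 and s(x)(n) = 1 if t_μⁿ(x) > 1/2 is a bijection. -/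
open Set Filter Topology

/-- The invariant Cantor set of the tent map: the points whose whole forward orbit
stays in `[0,1]`. -/
def tentCantorSet (μ : ℝ) : Set ℝ :=
  {x : ℝ | ∀ n : ℕ, (tentMap μ)^[n] x ∈ Icc (0:ℝ) 1}

/-- The itinerary map: `s(x)(n) = 0` if `t_μⁿ(x) < 1/2` and `s(x)(n) = 1` otherwise. -/
noncomputable def itinerary (μ : ℝ) : ℝ → ℕ → ℕ := fun x n =>
  if (tentMap μ)^[n] x < 1 / 2 then 0 else 1

/-! Auxiliary development. -/

/-- Inverse branches of the tent map. -/
noncomputable def tentBranch (μ : ℝ) (i : ℕ) : ℝ → ℝ :=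
  if i = 0 then fun y => y / μ else fun y => 1 - y / μ

/-- Composites of inverse branches along a symbol sequence. -/
noncomputable def tentComp (μ : ℝ) : ℕ → (ℕ → ℕ) → ℝ → ℝ
  | 0, _, y => y
  | (n+1), u, y => tentBranch μ (u 0) (tentComp μ n (fun k => u (k+1)) y)

/-- The point coded by a symbol sequence. -/
noncomputable def tentPoint (μ : ℝ) (u : ℕ → ℕ) : ℝ :=
  limUnder atTop (fun n => tentComp μ n u 0)

variable {μ : ℝ}

lemma tentMap_eq_min (z : ℝ) : tentMap μ z = μ * min z (1 - z) := by
  unfold tentMap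
  rcases le_or_gt z (1/2) with h | h
  · rw [if_pos h, min_eq_left (by linarith)]
  · rw [if_neg (not_le.mpr h), min_eq_right (by linarith)]

lemma tentMap_continuous : Continuous (tentMap μ) := by
  have : tentMap μ = fun z => μ * min z (1 - z) := funext fun z => tentMap_eq_min z
  rw [this]
  exact continuous_const.mul (continuous_id.min (continuous_const.sub continuous_id))

lemma tentMap_of_half_le {z : ℝ} (h : 1/2 ≤ z) : tentMap μ z = μ * (1 - z) := by
  rw [tentMap_eq_min, min_eq_right (by linarith)]

section mu

variable (hμ : 2 < μ)
include hμ

lemma μpos : (0:ℝ) < μ := by linarith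

lemma tentBranch_mem {i : ℕ} {y : ℝ} (hy : y ∈ Icc (0:ℝ) 1) :
    tentBranch μ i y ∈ Icc (0:ℝ) 1 := by
  have h0 : (0:ℝ) < μ := by linarith
  have h1 : y / μ ≤ 1 := by
    rw [div_le_one h0]; linarith [hy.2]
  have h2 : 0 ≤ y / μ := div_nonneg hy.1 h0.le
  unfold tentBranch
  split <;> constructor <;> simp <;> linarith

lemma tentBranch_lt {y : ℝ} (hy : y ∈ Icc (0:ℝ) 1) :
    tentBranch μ 0 y < 1/2 := by
  have h0 : (0:ℝ) < μ := by linarith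
  have : y / μ < 1/2 := by
    rw [div_lt_iff₀ h0]; nlinarith [hy.2]
  simpa [tentBranch] using this

lemma tentBranch_gt {i : ℕ} (hi : i ≠ 0) {y : ℝ} (hy : y ∈ Icc (0:ℝ) 1) :
    1/2 < tentBranch μ i y := by
  have h0 : (0:ℝ) < μ := by linarith
  have : y / μ < 1/2 := by
    rw [div_lt_iff₀ h0]; nlinarith [hy.2]
  simp only [tentBranch, if_neg hi]
  linarith

lemma tentMap_tentBranch {i : ℕ} {y : ℝ} (hy : y ∈ Icc (0:ℝ) 1) :
    tentMap μ (tentBranch μ i y) = y := by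
  have h0 : (0:ℝ) < μ := by linarith
  rcases eq_or_ne i 0 with rfl | hi
  · have h := tentBranch_lt hμ hy
    simp only [tentBranch, if_pos rfl, ↓reduceIte] at h ⊢
    rw [tentMap, if_pos h.le]
    field_simp
  · have h := tentBranch_gt hμ hi hy
    rw [tentMap, if_neg (not_le.mpr h)]
    simp only [tentBranch, if_neg hi]
    field_simp
    ring

lemma tentBranch_dist {i : ℕ} (y y' : ℝ) :
    |tentBranch μ i y - tentBranch μ i y'| = |y - y'| / μ := by
  have h0 : (0:ℝ) < μ := by linarith
  unfold tentBranch
  split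
  · rw [div_sub_div_same, abs_div, abs_of_pos h0]
  · rw [show 1 - y / μ - (1 - y' / μ) = -((y - y')/μ) by ring, abs_neg, abs_div,
      abs_of_pos h0]

lemma tentComp_mem {n : ℕ} {u : ℕ → ℕ} {y : ℝ} (hy : y ∈ Icc (0:ℝ) 1) :
    tentComp μ n u y ∈ Icc (0:ℝ) 1 := by
  induction n generalizing u with
  | zero => exact hy
  | succ n ih => exact tentBranch_mem hμ (ih)

lemma tentComp_dist {n : ℕ} {u : ℕ → ℕ} (y y' : ℝ) :
    |tentComp μ n u y - tentComp μ n u y'| = |y - y'| / μ ^ n := by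
  induction n generalizing u with
  | zero => simp [tentComp]
  | succ n ih =>
      rw [tentComp, tentComp, tentBranch_dist hμ, ih, div_div, pow_succ]

omit hμ in
lemma tentComp_succ_right (n : ℕ) (u : ℕ → ℕ) (y : ℝ) :
    tentComp μ (n+1) u y = tentComp μ n u (tentBranch μ (u n) y) := by
  induction n generalizing u with
  | zero => rfl
  | succ n ih =>
      show tentBranch μ (u 0) (tentComp μ (n+1) (fun k => u (k+1)) y) = _
      rw [ih]
      rfl

lemma tentComp_cauchy (u : ℕ → ℕ) : CauchySeq (fun n => tentComp μ n u 0) := by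
  have h0 : (0:ℝ) < μ := by linarith
  apply cauchySeq_of_le_geometric (1/μ) 1 (by rw [div_lt_one h0]; linarith)
  intro n
  rw [Real.dist_eq, tentComp_succ_right, tentComp_dist hμ]

  have hb : tentBranch μ (u n) 0 ∈ Icc (0:ℝ) 1 := tentBranch_mem hμ ⟨le_refl 0, zero_le_one⟩
  have h1 : |0 - tentBranch μ (u n) 0| ≤ 1 := by
    rw [abs_sub_comm, sub_zero, abs_of_nonneg hb.1]; exact hb.2
  calc |0 - tentBranch μ (u n) 0| / μ ^ n ≤ 1 / μ ^ n := by
        gcongr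
    _ = 1 * (1/μ)^n := by rw [one_mul, div_pow, one_pow]

lemma tentPoint_tendsto (u : ℕ → ℕ) :
    Tendsto (fun n => tentComp μ n u 0) atTop (𝓝 (tentPoint μ u)) :=
  (tentComp_cauchy hμ u).tendsto_limUnder

lemma tentPoint_mem (u : ℕ → ℕ) : tentPoint μ u ∈ Icc (0:ℝ) 1 :=
  isClosed_Icc.mem_of_tendsto (tentPoint_tendsto hμ u)
    (Eventually.of_forall fun n => tentComp_mem hμ ⟨le_refl 0, zero_le_one⟩)

lemma tentPoint_eq_branch (u : ℕ → ℕ) :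
    tentPoint μ u = tentBranch μ (u 0) (tentPoint μ (fun k => u (k+1))) := by
  have h1 : Tendsto (fun n => tentComp μ (n+1) u 0) atTop (𝓝 (tentPoint μ u)) :=
    (tentPoint_tendsto hμ u).comp (tendsto_add_atTop_nat 1)
  have hc : Continuous (tentBranch μ (u 0)) := by
    unfold tentBranch; split
    · exact continuous_id.div_const μ
    · exact continuous_const.sub (continuous_id.div_const μ)
  have h2 : Tendsto (fun n => tentComp μ (n+1) u 0) atTop
      (𝓝 (tentBranch μ (u 0) (tentPoint μ (fun k => u (k+1))))) := by
    have := (hc.tendsto _).comp (tentPoint_tendsto hμ (fun k => u (k+1)))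
    exact this
  exact tendsto_nhds_unique h1 h2

lemma tentMap_tentPoint (u : ℕ → ℕ) :
    tentMap μ (tentPoint μ u) = tentPoint μ (fun k => u (k+1)) := by
  rw [tentPoint_eq_branch hμ u]
  exact tentMap_tentBranch hμ (tentPoint_mem hμ _)

lemma tentPoint_lt {u : ℕ → ℕ} (h : u 0 = 0) : tentPoint μ u < 1/2 := by
  rw [tentPoint_eq_branch hμ u, h]
  exact tentBranch_lt hμ (tentPoint_mem hμ _)

lemma tentPoint_gt {u : ℕ → ℕ} (h : u 0 ≠ 0) : 1/2 < tentPoint μ u := by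
  rw [tentPoint_eq_branch hμ u]
  exact tentBranch_gt hμ h (tentPoint_mem hμ _)

lemma tentPoint_iterate (u : ℕ → ℕ) (n : ℕ) :
    (tentMap μ)^[n] (tentPoint μ u) = tentPoint μ (fun k => u (k+n)) := by
  induction n generalizing u with
  | zero => simp
  | succ n ih =>
      rw [Function.iterate_succ_apply, tentMap_tentPoint hμ, ih]
      exact congrArg (tentPoint μ) (funext fun k => congrArg u (by omega))

end mu

/-- For `μ > 2`, no point of the invariant set ever hits `1/2`, and the itinerary map is a
bijection from the invariant set onto the full shift space `{0,1}^ℕ`. -/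
theorem itinerary_bijective (μ : ℝ) (hμ : 2 < μ) :
    (∀ x ∈ tentCantorSet μ, ∀ n : ℕ, (tentMap μ)^[n] x ≠ 1 / 2) ∧
    Set.BijOn (itinerary μ) (tentCantorSet μ) {u : ℕ → ℕ | ∀ n, u n = 0 ∨ u n = 1} := by
  have h0 : (0:ℝ) < μ := by linarith
  have hne : ∀ x ∈ tentCantorSet μ, ∀ n : ℕ, (tentMap μ)^[n] x ≠ 1 / 2 := by
    intro x hx n h
    have h1 := (hx (n+1)).2
    rw [Function.iterate_succ_apply', h, tentMap, if_pos le_rfl] at h1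
    linarith
  refine ⟨hne, ?_, ?_, ?_⟩
  · intro x _
    intro n
    unfold itinerary
    split
    · exact Or.inl rfl
    · exact Or.inr rfl
  · -- injectivity
    intro x hx y hy hit
    by_contra hxy
    have key : ∀ n : ℕ, |(tentMap μ)^[n] x - (tentMap μ)^[n] y| = μ ^ n * |x - y| := by
      intro n
      induction n with
      | zero => simp
      | succ n ih =>
          have hitn : itinerary μ x n = itinerary μ y n := by rw [hit]
          unfold itinerary at hitn
          rw [Function.iterate_succ_apply', Function.iterate_succ_apply']
          rcases lt_or_ge ((tentMap μ)^[n] x) (1/2) with hxn | hxn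
          · rcases lt_or_ge ((tentMap μ)^[n] y) (1/2) with hyn | hyn
            · rw [tentMap, if_pos hxn.le, tentMap, if_pos hyn.le, ← mul_sub, abs_mul,
                abs_of_pos h0, ih, pow_succ]
              ring
            · rw [if_pos hxn, if_neg (not_lt.mpr hyn)] at hitn
              exact absurd hitn (by norm_num)
          · rcases lt_or_ge ((tentMap μ)^[n] y) (1/2) with hyn | hyn
            · rw [if_neg (not_lt.mpr hxn), if_pos hyn] at hitn
              exact absurd hitn (by norm_num)
            · rw [tentMap_of_half_le hxn, tentMap_of_half_le hyn,
                show μ * (1 - (tentMap μ)^[n] x) - μ * (1 - (tentMap μ)^[n] y)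
                  = -(μ * ((tentMap μ)^[n] x - (tentMap μ)^[n] y)) by ring,
                abs_neg, abs_mul, abs_of_pos h0, ih, pow_succ]
              ring
    have hd : 0 < |x - y| := abs_pos.mpr (sub_ne_zero.mpr hxy)
    obtain ⟨n, hn⟩ := pow_unbounded_of_one_lt (|x - y|⁻¹) (show (1:ℝ) < μ by linarith)
    have hbound : |(tentMap μ)^[n] x - (tentMap μ)^[n] y| ≤ 1 := by
      have hx1 := hx n
      have hy1 := hy n
      rw [abs_sub_le_iff]
      constructor <;> linarith [hx1.1, hx1.2, hy1.1, hy1.2]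
    rw [key n] at hbound
    have : |x - y|⁻¹ < μ ^ n := hn
    have : 1 < μ ^ n * |x - y| := by
      rw [← inv_mul_cancel₀ hd.ne']
      exact mul_lt_mul_of_pos_right this hd
    linarith
  · -- surjectivity
    intro u hu
    refine ⟨tentPoint μ u, ?_, ?_⟩
    · intro n
      rw [tentPoint_iterate hμ u n]
      exact tentPoint_mem hμ _
    · funext n
      unfold itinerary
      rw [tentPoint_iterate hμ u n]
      rcases hu n with h | h
      · rw [if_pos (tentPoint_lt hμ (by simpa using h))]
        exact h.symm
      · rw [if_neg (not_lt.mpr (tentPoint_gt hμ (by simp [h])).le)]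
        exact h.symm
end
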